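/- If the σ-hermitian form h on V (dim V = n ≥ 3, n = 2ℓ with 2 ≤ ℓ < n) is isotropic, then the induced form Λ^ℓ h on Λ^ℓ V is isotropic, and the K_ℓ-valued form g is isotropic as well. -/

import Mathlib

open ExteriorAlgebra

/-- The wedge product of a family of vectors in the exterior algebra. -/
noncomputable def wedgeFam (F : Type*) {V : Type*} [Field F] [AddCommGroup V] [Module F V]
    {k : ℕ} (u : Fin k → V) : ExteriorAlgebra F V :=
  (List.ofFn fun i => ExteriorAlgebra.ι F (u i)).prod

/-- The element `x₀ + j·x₁` of the algebra `K_ℓ`. -/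
def Kmk {F : Type*} [Field F] (σ : F → F) (δ x0 x1 : F) : Matrix (Fin 2) (Fin 2) F :=
  !![x0, δ * σ x1; x1, σ x0]


theorem aux_iMulti_ne_zero {F V : Type*} [Field F] [AddCommGroup V] [Module F V]
    {k : ℕ} {f : Fin k → V} (hf : LinearIndependent F f) :
    ExteriorAlgebra.ιMulti F k f ≠ 0 := by
  classical
  have hinj : Function.Injective f := hf.injective
  have hs : LinearIndepOn F id (Set.range f) := (linearIndepOn_id_range_iff hinj).mpr hf
  set B := Module.Basis.extend hs with hB
  have hsub : Set.range f ⊆ hs.extend (Set.subset_univ _) := hs.subset_extend _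
  set idx : Fin k → hs.extend (Set.subset_univ _) :=
    fun i => ⟨f i, hsub (Set.mem_range_self i)⟩ with hidx
  have hidx_inj : Function.Injective idx := by
    intro i j hij
    exact hinj (congrArg Subtype.val hij)
  have hBidx : ∀ i, B (idx i) = f i := fun i => Module.Basis.extend_apply_self hs (idx i)
  set C : V →ₗ[F] (Fin k → F) := LinearMap.pi (fun i => B.coord (idx i)) with hC
  set A : V [⋀^Fin k]→ₗ[F] F := Matrix.detRowAlternating.compLinearMap C with hA
  have hAf : A f = 1 := by
    have h1 : (Matrix.of fun i j => C (f i) j) = (1 : Matrix (Fin k) (Fin k) F) := by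
      ext i j
      simp only [Matrix.of_apply, hC, LinearMap.pi_apply, ← hBidx i, Module.Basis.coord_apply,
        Module.Basis.repr_self]
      rw [Finsupp.single_apply]
      by_cases hij : i = j
      · simp [hij, Matrix.one_apply]
      · rw [if_neg (fun he => hij (hidx_inj he)), Matrix.one_apply_ne hij]
    show Matrix.detRowAlternating (fun i => C (f i)) = 1
    have : Matrix.detRowAlternating (fun i => C (f i))
        = (Matrix.of fun i j => C (f i) j).det := rfl
    rw [this, h1, Matrix.det_one]
  intro h0
  set fam : ∀ i, V [⋀^Fin i]→ₗ[F] F := Function.update (fun i => 0) k A with hfam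
  have hlift := liftAlternating_apply_ιMulti (R := F) (N := F) fam f
  rw [h0, map_zero] at hlift
  have hfamk : fam k = A := by simp [hfam]
  rw [hfamk, hAf] at hlift
  exact one_ne_zero hlift.symm

theorem aux_wedge_sq_zero {F V : Type*} [Field F] [AddCommGroup V] [Module F V]
    {k : ℕ} (f : Fin k → V) (hk : 0 < k) :
    ExteriorAlgebra.ιMulti F k f * ExteriorAlgebra.ιMulti F k f = 0 := by
  have happ : ExteriorAlgebra.ιMulti F k f * ExteriorAlgebra.ιMulti F k f
      = ExteriorAlgebra.ιMulti F (k + k) (Fin.append f f) := by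
    simp only [ιMulti_apply]
    rw [← List.prod_append, ← List.ofFn_fin_append]
    have hfe : (fun i => ExteriorAlgebra.ι F (Fin.append f f i))
        = Fin.append (fun i => ExteriorAlgebra.ι F (f i)) (fun i => ExteriorAlgebra.ι F (f i)) := by
      funext i
      refine Fin.addCases (fun j => ?_) (fun j => ?_) i
      · rw [Fin.append_left, Fin.append_left]
      · rw [Fin.append_right, Fin.append_right]
    rw [hfe]
  rw [happ]
  have h1 : Fin.append f f (Fin.castAdd k ⟨0, hk⟩) = f ⟨0, hk⟩ := Fin.append_left f f _
  have h2 : Fin.append f f (Fin.natAdd k ⟨0, hk⟩) = f ⟨0, hk⟩ := Fin.append_right f f _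
  exact AlternatingMap.map_eq_zero_of_eq _ _ (h1.trans h2.symm)
    (by simp [Fin.ext_iff, Fin.castAdd, Fin.natAdd]; omega)


/-- if the σ-hermitian form `h` is isotropic (with `n = 2ℓ`,
`2 ≤ ℓ < n`), then `Λ^ℓ h` is isotropic and the `K_ℓ`-valued form `g` is
isotropic as well. -/
theorem isotropic_h_gives_isotropic_g
    {F V : Type*} [Field F] [AddCommGroup V] [Module F V] [FiniteDimensional F V]
    (n ℓ : ℕ) (hfr : Module.finrank F V = n) (hn2 : n = 2 * ℓ)
    (hℓ2 : 2 ≤ ℓ) (hℓn : ℓ < n)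
    (σ : F ≃+* F) (hσ : ∀ a, σ (σ a) = a)
    (h : V → V → F)
    (h_add_left : ∀ u u' w, h (u + u') w = h u w + h u' w)
    (h_add_right : ∀ u w w', h u (w + w') = h u w + h u w')
    (h_smul_left : ∀ (s : F) u w, h (s • u) w = σ s * h u w)
    (h_smul_right : ∀ (s : F) u w, h u (s • w) = s * h u w)
    (h_herm : ∀ u w, h w u = σ (h u w))
    (h_nondeg : ∀ u, (∀ w, h u w = 0) → u = 0)
    (v : Module.Basis (Fin n) F V)
    (h_orth : ∀ i j, i ≠ j → h (v i) (v j) = 0)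
    (H : ExteriorAlgebra F V → ExteriorAlgebra F V → F)
    (H_add_left : ∀ x x' y, H (x + x') y = H x y + H x' y)
    (H_add_right : ∀ x y y', H x (y + y') = H x y + H x y')
    (H_smul_left : ∀ (s : F) x y, H (s • x) y = σ s * H x y)
    (H_smul_right : ∀ (s : F) x y, H x (s • y) = s * H x y)
    (H_det : ∀ (k : ℕ) (u w : Fin k → V),
      H (wedgeFam F u) (wedgeFam F w) = Matrix.det (Matrix.of fun i j => h (u i) (w j)))
    (H_cross : ∀ (k m : ℕ), k ≠ m → ∀ x ∈ ⋀[F]^k V, ∀ y ∈ ⋀[F]^m V, H x y = 0)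
    (b : ExteriorAlgebra F V →ₗ[F] F)
    (hb_inj : ∀ z ∈ ⋀[F]^n V, b z = 0 → z = 0)
    (hb_off : ∀ (k : ℕ), k ≠ n → ∀ z ∈ ⋀[F]^k V, b z = 0)
    (J : ExteriorAlgebra F V → ExteriorAlgebra F V)
    (hJ_mem : ∀ x ∈ ⋀[F]^ℓ V, J x ∈ ⋀[F]^ℓ V)
    (hJ_char : ∀ x ∈ ⋀[F]^ℓ V, ∀ y ∈ ⋀[F]^ℓ V, b (J x * y) = H x y)
    (δ : F) (hδR : σ δ = δ) (hδ0 : δ ≠ 0)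
    (hJsq : ∀ x ∈ ⋀[F]^ℓ V, J (J x) = δ • x)
    -- h is isotropic
    (hiso : ∃ u : V, u ≠ 0 ∧ h u u = 0) :
    -- Λ^ℓ h is isotropic …
    (∃ X ∈ ⋀[F]^ℓ V, X ≠ 0 ∧ H X X = 0) ∧
    -- … and g is isotropic as well
    (∃ X ∈ ⋀[F]^ℓ V, X ≠ 0 ∧
        Kmk ⇑σ δ (H X X) ((-1 : F) ^ ℓ * b (X * X)) = 0) := by

  classical
  obtain ⟨u, hu0, huu⟩ := hiso
  haveI : NeZero ℓ := ⟨by omega⟩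
  set φ : V →ₗ[F] F :=
    { toFun := h u
      map_add' := h_add_right u
      map_smul' := fun s w => by simpa [smul_eq_mul] using h_smul_right s u w } with hφ
  have hφu : φ u = 0 := huu
  have hφne : ∃ x, φ x ≠ 0 := by
    by_contra hc
    push_neg at hc
    exact hu0 (h_nondeg u hc)
  have hrange : LinearMap.range φ = ⊤ := by
    obtain ⟨x, hx⟩ := hφne
    refine Submodule.eq_top_iff'.mpr fun c => ?_
    have hcx : c = (c * (φ x)⁻¹) • (φ x) := by
      rw [smul_eq_mul]; field_simp
    exact hcx ▸ Submodule.smul_mem _ _ (LinearMap.mem_range_self φ x)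
  have hker : ℓ ≤ Module.finrank F (LinearMap.ker φ) := by
    have hsum := LinearMap.finrank_range_add_finrank_ker φ
    rw [hrange, finrank_top, Module.finrank_self, hfr] at hsum
    omega
  have humem : u ∈ LinearMap.ker φ := LinearMap.mem_ker.mpr hφu
  set u' : LinearMap.ker φ := ⟨u, humem⟩ with hu'
  have hu'0 : u' ≠ 0 := fun hc => hu0 (by simpa [hu'] using congrArg Subtype.val hc)
  have hsing : LinearIndepOn F id ({u'} : Set (LinearMap.ker φ)) :=
    (linearIndepOn_singleton_iff F).mpr hu'0
  set B := Module.Basis.extend hsing with hB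
  haveI : Fintype (hsing.extend (Set.subset_univ _)) := FiniteDimensional.fintypeBasisIndex B
  have hcard : Module.finrank F (LinearMap.ker φ)
      = Fintype.card (hsing.extend (Set.subset_univ _)) := Module.finrank_eq_card_basis B
  have hℓcard : ℓ ≤ Fintype.card (hsing.extend (Set.subset_univ _)) := hcard ▸ hker
  have hu't : u' ∈ hsing.extend (Set.subset_univ _) := hsing.subset_extend _ rfl
  set e : Fin (Fintype.card (hsing.extend (Set.subset_univ _)))
      ≃ hsing.extend (Set.subset_univ _) := (Fintype.equivFin _).symm with he
  set z0 : Fin (Fintype.card (hsing.extend (Set.subset_univ _))) := ⟨0, by omega⟩ with hz0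
  set e' := (Equiv.swap z0 (e.symm ⟨u', hu't⟩)).trans e with he'
  have he'0 : e' z0 = ⟨u', hu't⟩ := by
    simp [he', Equiv.swap_apply_left]
  set g : Fin ℓ → hsing.extend (Set.subset_univ _) :=
    fun i => e' (Fin.castLE hℓcard i) with hg
  have hg_inj : Function.Injective g :=
    e'.injective.comp (Fin.castLE_injective hℓcard)
  set f : Fin ℓ → V := fun i => ((B (g i) : LinearMap.ker φ) : V) with hf
  have hcast0 : Fin.castLE hℓcard (0 : Fin ℓ) = z0 := rfl
  have hf0 : f 0 = u := by
    simp only [hf, hg, hcast0, he'0]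
    rw [Module.Basis.extend_apply_self]
  have hfker : ∀ i, φ (f i) = 0 := fun i => (B (g i)).2
  have hfli : LinearIndependent F f := by
    have h1 : LinearIndependent F
        (fun x : hsing.extend (Set.subset_univ _) => ((B x : LinearMap.ker φ) : V)) :=
      B.linearIndependent.map' (LinearMap.ker φ).subtype (Submodule.ker_subtype _)
    exact h1.comp g hg_inj
  set X := ExteriorAlgebra.ιMulti F ℓ f with hX
  have hXw : wedgeFam F f = X := rfl
  have hXmem : X ∈ ⋀[F]^ℓ V := ExteriorAlgebra.ιMulti_range F ℓ (Set.mem_range_self f)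
  have hX0 : X ≠ 0 := aux_iMulti_ne_zero hfli
  have hHXX : H X X = 0 := by
    rw [← hXw, H_det ℓ f f]
    refine Matrix.det_eq_zero_of_row_eq_zero 0 fun j => ?_
    show h (f 0) (f j) = 0
    rw [hf0]
    exact hfker j
  have hXX : X * X = 0 := aux_wedge_sq_zero f (by omega)
  refine ⟨⟨X, hXmem, hX0, hHXX⟩, ⟨X, hXmem, hX0, ?_⟩⟩
  rw [hXX, map_zero, mul_zero, hHXX]
  ext i j
  fin_cases i <;> fin_cases j <;> simp [Kmk]
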